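/- For any n ≥ 4 and any p > 1, λ_{1,p}(P_{n+1}) > λ_{1,p}(T_{n,3}), where P_{n+1} is the path graph on n+1 vertices and T_{n,3} is the tadpole graph on n vertices with head of size 3. -/

import Mathlib

open scoped Classical

noncomputable section

/-- The term `|f x - f y| ^ p` as a function on unordered pairs. -/
noncomputable def edgeTerm {V : Type*} (p : ℝ) (f : V → ℝ) : Sym2 V → ℝ :=
  Sym2.lift ⟨fun x y => |f x - f y| ^ p, fun x y => by dsimp only; rw [abs_sub_comm]⟩

/-- The `p`-Rayleigh quotient of a function on a finite graph. -/
noncomputable def rayleigh {V : Type*} [Fintype V] [DecidableEq V] (G : SimpleGraph V)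
    (p : ℝ) (f : V → ℝ) : ℝ :=
  (∑ e ∈ G.edgeFinset, edgeTerm p f e) / ∑ v, |f v| ^ p

/-- The first `p`-Dirichlet eigenvalue: infimum of the Rayleigh quotient over nonzero
functions vanishing on the boundary (vertices of degree one). -/
noncomputable def lambda1 {V : Type*} [Fintype V] [DecidableEq V] (G : SimpleGraph V)
    (p : ℝ) : ℝ :=
  sInf {r | ∃ f : V → ℝ, f ≠ 0 ∧ (∀ v, G.degree v = 1 → f v = 0) ∧ r = rayleigh G p f}

/-- The tadpole graph `T_{n,i}` on vertices `0,…,n-1` (vertex `t_k` is `k-1`):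
edges `t_k t_{k+1}` for `1 ≤ k ≤ n-1` together with the edge `t_1 t_i`. -/
def tadpole (n i : ℕ) : SimpleGraph (Fin n) :=
  SimpleGraph.fromRel (fun a b => a.val + 1 = b.val ∨ (a.val = 0 ∧ b.val = i - 1))

/-- The path graph on `n` vertices `0,…,n-1`. -/
def pathG (n : ℕ) : SimpleGraph (Fin n) :=
  SimpleGraph.fromRel (fun a b : Fin n => a.val + 1 = b.val)

/-- The set of edges of `G` with exactly one endpoint in `U`. -/
noncomputable def crossEdges {V : Type*} [Fintype V] [DecidableEq V] (G : SimpleGraph V)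
    (U : Finset V) : Finset (Sym2 V) :=
  G.edgeFinset.filter fun e =>
    Sym2.lift ⟨fun x y => (x ∈ U ∧ y ∉ U) ∨ (x ∉ U ∧ y ∈ U),
      fun x y => by simp only [eq_iff_iff]; tauto⟩ e

/-- The Dirichlet Cheeger constant: infimum of `|E(U,Uᶜ)|/|U|` over nonempty sets `U`
of interior vertices (vertices of degree at least two). -/
noncomputable def dCheeger {V : Type*} [Fintype V] [DecidableEq V] (G : SimpleGraph V) : ℝ :=
  sInf {r | ∃ U : Finset V, U.Nonempty ∧ (∀ v ∈ U, 2 ≤ G.degree v) ∧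
    r = ((crossEdges G U).card : ℝ) / U.card}

/-! ### Auxiliary development -/

namespace PT

open Finset Filter Topology
open Fin.NatCast

/-- The odd power function `x ↦ |x|^(p-2) x`, the derivative of `|x|^p / p`. -/
noncomputable def phi (p : ℝ) (x : ℝ) : ℝ := |x| ^ (p - 2) * x

lemma phi_zero (p : ℝ) : phi p 0 = 0 := by simp [phi]

lemma phi_of_pos {p x : ℝ} (hx : 0 < x) : phi p x = x ^ (p - 1) := by
  rw [phi, abs_of_pos hx, ← Real.rpow_add_one (ne_of_gt hx)]
  ring_nf

lemma phi_of_neg {p x : ℝ} (hx : x < 0) : phi p x = -((-x) ^ (p - 1)) := by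
  rw [phi, abs_of_neg hx]
  have h : (-x) ^ (p - 1) = (-x) ^ (p - 2) * (-x) := by
    rw [← Real.rpow_add_one (by intro hh; nlinarith [hh] : (-x) ≠ 0)]; ring_nf
  rw [h]; ring

lemma phi_nonneg_of_nonneg {p x : ℝ} (hx : 0 ≤ x) : 0 ≤ phi p x := by
  rcases eq_or_lt_of_le hx with h | h
  · simp [← h, phi_zero]
  · rw [phi_of_pos h]; exact Real.rpow_nonneg (le_of_lt h) _

lemma phi_nonpos_of_nonpos {p x : ℝ} (hx : x ≤ 0) : phi p x ≤ 0 := by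
  rcases eq_or_lt_of_le hx with h | h
  · simp [h, phi_zero]
  · rw [phi_of_neg h]; simpa using Real.rpow_nonneg (by linarith : (0:ℝ) ≤ -x) _

lemma phi_pos_of_pos {p x : ℝ} (hx : 0 < x) : 0 < phi p x := by
  rw [phi_of_pos hx]; exact Real.rpow_pos_of_pos hx _

lemma phi_eq_zero_iff {p x : ℝ} : phi p x = 0 ↔ x = 0 := by
  constructor
  · intro h
    rcases lt_trichotomy x 0 with hx | hx | hx
    · exfalso
      rw [phi_of_neg hx] at h
      have := Real.rpow_pos_of_pos (by linarith : (0:ℝ) < -x) (p - 1)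
      linarith
    · exact hx
    · exfalso
      have := phi_pos_of_pos (p := p) hx
      linarith
  · rintro rfl; exact phi_zero p

lemma phi_mono {p : ℝ} (hp : 1 < p) : Monotone (phi p) := by
  intro a b hab
  rcases le_or_gt 0 a with ha | ha
  · rcases eq_or_lt_of_le ha with h | h
    · rw [← h, phi_zero]; exact phi_nonneg_of_nonneg (by linarith)
    · rw [phi_of_pos h, phi_of_pos (lt_of_lt_of_le h hab)]
      exact Real.rpow_le_rpow (le_of_lt h) hab (by linarith)
  · rcases le_or_gt 0 b with hb | hb
    · exact le_trans (phi_nonpos_of_nonpos (le_of_lt ha)) (phi_nonneg_of_nonneg hb)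
    · rw [phi_of_neg ha, phi_of_neg hb, neg_le_neg_iff]
      exact Real.rpow_le_rpow (by linarith) (by linarith) (by linarith)

lemma lt_of_phi_lt {p : ℝ} (hp : 1 < p) {a b : ℝ} (h : phi p a < phi p b) : a < b := by
  by_contra hc
  exact absurd (phi_mono hp (not_lt.mp hc)) (not_le.mpr h)

lemma hasDerivAt_abs_rpow' {p : ℝ} (hp : 1 < p) (x : ℝ) :
    HasDerivAt (fun y : ℝ => |y| ^ p) (p * phi p x) x := by
  have h := hasDerivAt_abs_rpow x hp
  have : p * |x| ^ (p - 2) * x = p * phi p x := by rw [phi]; ring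
  rwa [this] at h

lemma hasDerivAt_add_abs_rpow {p : ℝ} (hp : 1 < p) (c : ℝ) :
    HasDerivAt (fun t : ℝ => |c + t| ^ p) (p * phi p c) 0 := by
  have h := hasDerivAt_abs_rpow' hp (c + 0)
  have hin : HasDerivAt (fun t : ℝ => c + t) 1 (0:ℝ) := (hasDerivAt_id (0:ℝ)).const_add c
  have h2 := HasDerivAt.comp (0:ℝ) h hin
  simpa [Function.comp_def] using h2

lemma hasDerivAt_sub_abs_rpow {p : ℝ} (hp : 1 < p) (c : ℝ) :
    HasDerivAt (fun t : ℝ => |c - t| ^ p) (-(p * phi p c)) 0 := by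
  have h := hasDerivAt_abs_rpow' hp (c - 0)
  have hin : HasDerivAt (fun t : ℝ => c - t) (-1) (0:ℝ) := by
    exact (hasDerivAt_id' (0:ℝ)).const_sub c
  have h2 := HasDerivAt.comp (0:ℝ) h hin
  simpa [Function.comp_def] using h2

lemma continuous_abs_rpow {p : ℝ} (hp : 0 ≤ p) : Continuous (fun t : ℝ => |t| ^ p) := by
  rw [continuous_iff_continuousAt]
  intro t
  exact (Real.continuousAt_rpow_const |t| p (Or.inr hp)).comp continuous_abs.continuousAt

lemma pathG_adj {m : ℕ} (a b : Fin m) :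
    (pathG m).Adj a b ↔ a.val + 1 = b.val ∨ b.val + 1 = a.val := by
  rw [pathG, SimpleGraph.fromRel_adj]
  constructor
  · rintro ⟨-, h⟩; exact h
  · intro h; refine ⟨?_, h⟩; rintro rfl; omega

/-- consecutive edge -/
def edgeS (m : ℕ) [NeZero m] (k : ℕ) : Sym2 (Fin m) := s((k : Fin m), ((k+1 : ℕ) : Fin m))

lemma edgeS_val {m k : ℕ} [NeZero m] (h : k + 1 < m) :
    edgeS m k = s((⟨k, by omega⟩ : Fin m), (⟨k+1, h⟩ : Fin m)) := by
  unfold edgeS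
  congr 1 <;> ext
  · rw [Fin.val_natCast]; exact Nat.mod_eq_of_lt (by omega)
  · rw [Fin.val_natCast]; push_cast; exact Nat.mod_eq_of_lt (by omega)

lemma edgeS_injOn {m K : ℕ} [NeZero m] (hK : K + 1 ≤ m) :
    Set.InjOn (edgeS m) (range K) := by
  intro a ha b hb hab
  simp only [coe_range, Set.mem_Iio] at ha hb
  rw [edgeS_val (by omega), edgeS_val (by omega), Sym2.eq_iff] at hab
  rcases hab with ⟨h1, h2⟩ | ⟨h1, h2⟩ <;>
    · have e1 := congrArg Fin.val h1
      have e2 := congrArg Fin.val h2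
      simp only at e1 e2
      omega

lemma path_edgeFinset (n : ℕ) :
    (pathG (n+1)).edgeFinset = (range n).image (edgeS (n+1)) := by
  ext e
  induction e using Sym2.ind with
  | _ a b =>
    rw [SimpleGraph.mem_edgeFinset, mem_image]
    constructor
    · intro had
      rw [SimpleGraph.mem_edgeSet, pathG_adj] at had
      rcases had with h | h
      · refine ⟨a.val, mem_range.mpr (by omega), ?_⟩
        rw [edgeS_val (by omega)]
        congr 1 <;> ext <;> simp <;> omega
      · refine ⟨b.val, mem_range.mpr (by omega), ?_⟩
        rw [edgeS_val (by omega), Sym2.eq_swap]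
        congr 1 <;> ext <;> simp <;> omega
    · rintro ⟨k, hk, he⟩
      rw [mem_range] at hk
      rw [← he, edgeS_val (by omega), SimpleGraph.mem_edgeSet, pathG_adj]
      left; simp

lemma tadpole_adj {n : ℕ} (a b : Fin n) :
    (tadpole n 3).Adj a b ↔ a.val + 1 = b.val ∨ b.val + 1 = a.val ∨
      (a.val = 0 ∧ b.val = 2) ∨ (b.val = 0 ∧ a.val = 2) := by
  rw [tadpole, SimpleGraph.fromRel_adj]
  constructor
  · rintro ⟨-, h⟩; omega
  · intro h
    have hab : a ≠ b := by
      intro hh; rw [hh] at h; omega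
    exact ⟨hab, by omega⟩

lemma tadpole_edgeFinset {n : ℕ} (hn : 4 ≤ n) :
    haveI : NeZero n := ⟨by omega⟩
    (tadpole n 3).edgeFinset =
      insert s((⟨0, by omega⟩ : Fin n), (⟨2, by omega⟩ : Fin n)) ((range (n-1)).image (edgeS n)) := by
  haveI : NeZero n := ⟨by omega⟩
  ext e
  induction e using Sym2.ind with
  | _ a b =>
    rw [SimpleGraph.mem_edgeFinset, mem_insert, mem_image]
    constructor
    · intro had
      rw [SimpleGraph.mem_edgeSet, tadpole_adj] at had
      rcases had with h | h | ⟨h1, h2⟩ | ⟨h1, h2⟩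
      · refine Or.inr ⟨a.val, mem_range.mpr (by omega), ?_⟩
        rw [edgeS_val (by omega)]
        congr 1 <;> ext <;> simp <;> omega
      · refine Or.inr ⟨b.val, mem_range.mpr (by omega), ?_⟩
        rw [edgeS_val (by omega), Sym2.eq_swap]
        congr 1 <;> ext <;> simp <;> omega
      · left; congr 1 <;> ext <;> simp [h1, h2]
      · left; rw [Sym2.eq_swap]; congr 1 <;> ext <;> simp [h1, h2]
    · rintro (he | ⟨k, hk, he⟩)
      · rw [he, SimpleGraph.mem_edgeSet, tadpole_adj]
        simp
      · rw [mem_range] at hk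
        rw [← he, edgeS_val (by omega), SimpleGraph.mem_edgeSet, tadpole_adj]
        left; simp

lemma s02_not_mem_image {n : ℕ} (hn : 4 ≤ n) :
    haveI : NeZero n := ⟨by omega⟩
    s((⟨0, by omega⟩ : Fin n), (⟨2, by omega⟩ : Fin n)) ∉ (range (n-1)).image (edgeS n) := by
  haveI : NeZero n := ⟨by omega⟩
  rw [mem_image]
  rintro ⟨k, hk, he⟩
  rw [mem_range] at hk
  rw [edgeS_val (by omega), Sym2.eq_iff] at he
  rcases he with ⟨h1, h2⟩ | ⟨h1, h2⟩ <;>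
    · have e1 := congrArg Fin.val h1
      have e2 := congrArg Fin.val h2
      simp only at e1 e2
      omega

lemma path_two_le_degree {m : ℕ} (v : Fin m) (h1 : 1 ≤ v.val) (h2 : v.val + 1 ≤ m - 1) :
    2 ≤ (pathG m).degree v := by
  have hm : 3 ≤ m := by omega
  have hsub : ({⟨v.val - 1, by omega⟩, ⟨v.val + 1, by omega⟩} : Finset (Fin m)) ⊆
      (pathG m).neighborFinset v := by
    intro b hb
    rw [SimpleGraph.mem_neighborFinset, pathG_adj]
    rcases mem_insert.mp hb with rfl | hb
    · right; simp; omega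
    · rw [mem_singleton.mp hb]; left; simp
  have hcard : ({⟨v.val - 1, by omega⟩, ⟨v.val + 1, by omega⟩} : Finset (Fin m)).card = 2 := by
    rw [card_pair]
    intro hh
    have := congrArg Fin.val hh
    simp only at this
    omega
  calc 2 = _ := hcard.symm
    _ ≤ _ := card_le_card hsub
    _ = (pathG m).degree v := (SimpleGraph.card_neighborFinset_eq_degree _ _)

lemma path_degree_one_iff {n : ℕ} (hn : 4 ≤ n) (v : Fin (n+1)) :
    (pathG (n+1)).degree v = 1 ↔ (v.val = 0 ∨ v.val = n) := by
  constructor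
  · intro h
    by_contra hc
    push_neg at hc
    have := path_two_le_degree v (by omega) (by omega)
    omega
  · rintro (h | h)
    · have : (pathG (n+1)).neighborFinset v = {(⟨1, by omega⟩ : Fin (n+1))} := by
        ext b
        rw [SimpleGraph.mem_neighborFinset, pathG_adj, mem_singleton]
        constructor
        · intro hb; ext; simp; omega
        · intro hb; subst hb; left; show (v:ℕ) + 1 = 1; omega
      rw [← SimpleGraph.card_neighborFinset_eq_degree, this, card_singleton]
    · have : (pathG (n+1)).neighborFinset v = {(⟨n-1, by omega⟩ : Fin (n+1))} := by
        ext b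
        rw [SimpleGraph.mem_neighborFinset, pathG_adj, mem_singleton]
        constructor
        · intro hb; ext; simp; omega
        · intro hb; subst hb; right; simp; omega
      rw [← SimpleGraph.card_neighborFinset_eq_degree, this, card_singleton]

lemma tadpole_degree_one {n : ℕ} (hn : 4 ≤ n) (v : Fin n) (h : (tadpole n 3).degree v = 1) :
    v.val = n - 1 := by
  by_contra hc
  have h2 : 2 ≤ (tadpole n 3).degree v := by
    rcases Nat.eq_zero_or_pos v.val with h0 | h0
    · -- neighbors 1 and 2
      have hsub : ({⟨1, by omega⟩, ⟨2, by omega⟩} : Finset (Fin n)) ⊆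
          (tadpole n 3).neighborFinset v := by
        intro b hb
        rw [SimpleGraph.mem_neighborFinset, tadpole_adj]
        rcases mem_insert.mp hb with rfl | hb
        · left; simp; omega
        · rw [mem_singleton.mp hb]; right; right; left; simp; omega
      have hcard : ({⟨1, by omega⟩, ⟨2, by omega⟩} : Finset (Fin n)).card = 2 := by
        rw [card_pair]; intro hh; have := congrArg Fin.val hh; simp only at this; omega
      calc 2 = _ := hcard.symm
        _ ≤ _ := card_le_card hsub
        _ = _ := SimpleGraph.card_neighborFinset_eq_degree _ _
    · have hsub : ({⟨v.val - 1, by omega⟩, ⟨v.val + 1, by omega⟩} : Finset (Fin n)) ⊆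
          (tadpole n 3).neighborFinset v := by
        intro b hb
        rw [SimpleGraph.mem_neighborFinset, tadpole_adj]
        rcases mem_insert.mp hb with rfl | hb
        · right; left; simp; omega
        · rw [mem_singleton.mp hb]; left; simp
      have hcard : ({⟨v.val - 1, by omega⟩, ⟨v.val + 1, by omega⟩} : Finset (Fin n)).card = 2 := by
        rw [card_pair]; intro hh; have := congrArg Fin.val hh; simp only at this; omega
      calc 2 = _ := hcard.symm
        _ ≤ _ := card_le_card hsub
        _ = _ := SimpleGraph.card_neighborFinset_eq_degree _ _
  omega


/-! ### Explicit Rayleigh quotients -/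

noncomputable def den {m : ℕ} (p : ℝ) (f : Fin m → ℝ) : ℝ := ∑ v, |f v| ^ p

noncomputable def pnum (p : ℝ) (n : ℕ) (f : Fin (n+1) → ℝ) : ℝ :=
  ∑ j ∈ range n, |f (↑(j+1)) - f (↑j)| ^ p

noncomputable def tnum (p : ℝ) (n : ℕ) [NeZero n] (g : Fin n → ℝ) : ℝ :=
  (∑ j ∈ range (n-1), |g (↑(j+1)) - g (↑j)| ^ p) + |g ((2:ℕ) : Fin n) - g ((0:ℕ) : Fin n)| ^ p

lemma edgeTerm_mk {V : Type*} (p : ℝ) (f : V → ℝ) (a b : V) :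
    edgeTerm p f s(a, b) = |f a - f b| ^ p := rfl

lemma den_eq {m : ℕ} [NeZero m] (p : ℝ) (f : Fin m → ℝ) :
    den p f = ∑ k ∈ range m, |f (↑k)| ^ p := by
  rw [den, ← Fin.sum_univ_eq_sum_range (fun k => |f (↑k)| ^ p) m]
  exact sum_congr rfl fun v _ => by rw [Fin.cast_val_eq_self]

lemma path_sum (p : ℝ) (n : ℕ) (f : Fin (n+1) → ℝ) :
    ∑ e ∈ (pathG (n+1)).edgeFinset, edgeTerm p f e = pnum p n f := by
  rw [path_edgeFinset, sum_image (fun x hx y hy h => edgeS_injOn (le_refl (n+1)) hx hy h)]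
  refine sum_congr rfl fun k hk => ?_
  rw [edgeS, edgeTerm_mk, abs_sub_comm]

lemma rayleigh_path (p : ℝ) (n : ℕ) (f : Fin (n+1) → ℝ) :
    rayleigh (pathG (n+1)) p f = pnum p n f / den p f := by
  rw [rayleigh, path_sum]; rfl

lemma tad_sum (p : ℝ) {n : ℕ} (hn : 4 ≤ n) [NeZero n] (g : Fin n → ℝ) :
    ∑ e ∈ (tadpole n 3).edgeFinset, edgeTerm p g e = tnum p n g := by
  rw [tadpole_edgeFinset hn, sum_insert (s02_not_mem_image hn),
    sum_image (fun x hx y hy h => edgeS_injOn (by omega) hx hy h)]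
  rw [tnum, add_comm]
  congr 1
  · refine sum_congr rfl fun k hk => ?_
    rw [edgeS, edgeTerm_mk, abs_sub_comm]
  · rw [edgeTerm_mk, abs_sub_comm]
    have h2 : ((2:ℕ) : Fin n) = ⟨2, by omega⟩ := by
      ext; rw [Fin.val_natCast]; exact Nat.mod_eq_of_lt (by omega)
    have h0 : ((0:ℕ) : Fin n) = ⟨0, by omega⟩ := by
      ext; rw [Fin.val_natCast]; exact Nat.mod_eq_of_lt (by omega)
    rw [h2, h0]

lemma rayleigh_tad (p : ℝ) {n : ℕ} (hn : 4 ≤ n) (g : Fin n → ℝ) :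
    haveI : NeZero n := ⟨by omega⟩
    rayleigh (tadpole n 3) p g = tnum p n g / den p g := by
  haveI : NeZero n := ⟨by omega⟩
  rw [rayleigh, tad_sum p hn]; rfl


/-! ### The variational problem on the path -/

lemma pnum_nonneg (p : ℝ) (n : ℕ) (f : Fin (n+1) → ℝ) : 0 ≤ pnum p n f :=
  sum_nonneg fun j _ => Real.rpow_nonneg (abs_nonneg _) _

lemma tnum_nonneg (p : ℝ) (n : ℕ) [NeZero n] (g : Fin n → ℝ) : 0 ≤ tnum p n g :=
  add_nonneg (sum_nonneg fun j _ => Real.rpow_nonneg (abs_nonneg _) _)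
    (Real.rpow_nonneg (abs_nonneg _) _)

lemma den_nonneg (p : ℝ) {m : ℕ} (f : Fin m → ℝ) : 0 ≤ den p f :=
  sum_nonneg fun v _ => Real.rpow_nonneg (abs_nonneg _) _

lemma den_pos (p : ℝ) {m : ℕ} {f : Fin m → ℝ} (hf : f ≠ 0) : 0 < den p f := by
  obtain ⟨v, hv⟩ := Function.ne_iff.mp hf
  refine sum_pos' (fun w _ => Real.rpow_nonneg (abs_nonneg _) _) ⟨v, mem_univ v, ?_⟩
  exact Real.rpow_pos_of_pos (abs_pos.mpr hv) _

lemma den_zero {m : ℕ} {p : ℝ} (hp : p ≠ 0) : den p (0 : Fin m → ℝ) = 0 := by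
  simp [den, Real.zero_rpow hp]

/-- Scaling of `den`. -/
lemma den_smul (p : ℝ) {m : ℕ} (c : ℝ) (f : Fin m → ℝ) :
    den p (fun v => c * f v) = |c| ^ p * den p f := by
  rw [den, den, mul_sum]
  refine sum_congr rfl fun v _ => ?_
  rw [abs_mul, Real.mul_rpow (abs_nonneg _) (abs_nonneg _)]

lemma pnum_smul (p : ℝ) (n : ℕ) (c : ℝ) (f : Fin (n+1) → ℝ) :
    pnum p n (fun v => c * f v) = |c| ^ p * pnum p n f := by
  rw [pnum, pnum, mul_sum]
  refine sum_congr rfl fun j _ => ?_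
  rw [← mul_sub, abs_mul, Real.mul_rpow (abs_nonneg _) (abs_nonneg _)]

/-- Admissible normalized functions. -/
def Kset (p : ℝ) (n : ℕ) : Set (Fin (n+1) → ℝ) :=
  {f | f 0 = 0 ∧ f (Fin.last n) = 0 ∧ den p f = 1}

lemma adm_iff {n : ℕ} (hn : 4 ≤ n) (f : Fin (n+1) → ℝ) :
    (∀ v, (pathG (n+1)).degree v = 1 → f v = 0) ↔ (f 0 = 0 ∧ f (Fin.last n) = 0) := by
  constructor
  · intro h
    constructor
    · exact h 0 ((path_degree_one_iff hn 0).mpr (Or.inl (Fin.val_zero _)))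
    · exact h (Fin.last n) ((path_degree_one_iff hn (Fin.last n)).mpr (Or.inr (Fin.val_last _)))
  · rintro ⟨h0, hl⟩ v hv
    rcases (path_degree_one_iff hn v).mp hv with h | h
    · have hv0 : v = 0 := by ext; simpa using h
      rw [hv0]; exact h0
    · have hvl : v = Fin.last n := by ext; simpa [Fin.val_last] using h
      rw [hvl]; exact hl

lemma continuous_den (p : ℝ) (hp : 0 ≤ p) (m : ℕ) :
    Continuous (fun f : Fin m → ℝ => den p f) := by
  refine continuous_finset_sum _ fun v _ => ?_
  exact (continuous_abs_rpow hp).comp (continuous_apply v)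

lemma continuous_pnum (p : ℝ) (hp : 0 ≤ p) (n : ℕ) :
    Continuous (fun f : Fin (n+1) → ℝ => pnum p n f) := by
  refine continuous_finset_sum _ fun j _ => ?_
  exact (continuous_abs_rpow hp).comp ((continuous_apply _).sub (continuous_apply _))

lemma Kset_compact {p : ℝ} (hp : 1 < p) (n : ℕ) : IsCompact (Kset p n) := by
  refine Metric.isCompact_of_isClosed_isBounded ?_ ?_
  · have h1 : IsClosed {f : Fin (n+1) → ℝ | f 0 = 0} :=
      isClosed_eq (continuous_apply 0) continuous_const
    have h2 : IsClosed {f : Fin (n+1) → ℝ | f (Fin.last n) = 0} :=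
      isClosed_eq (continuous_apply _) continuous_const
    have h3 : IsClosed {f : Fin (n+1) → ℝ | den p f = 1} :=
      isClosed_eq (continuous_den p (by linarith) _) continuous_const
    exact (h1.inter (h2.inter h3))
  · refine Bornology.IsBounded.subset (Metric.isBounded_closedBall (x := (0 : Fin (n+1) → ℝ)) (r := 1)) ?_
    rintro f ⟨-, -, hden⟩
    rw [mem_closedBall_zero_iff]
    rw [pi_norm_le_iff_of_nonneg (by norm_num)]
    intro v
    rw [Real.norm_eq_abs]
    by_contra hc
    push_neg at hc
    have h1 : |f v| ^ p ≤ den p f :=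
      single_le_sum (fun w _ => Real.rpow_nonneg (abs_nonneg _) _) (mem_univ v)
    have h2 : 1 < |f v| ^ p :=
      (Real.one_lt_rpow_iff (abs_nonneg _)).mpr (Or.inl ⟨hc, by linarith⟩)
    rw [hden] at h1
    linarith

lemma Kset_nonempty {p : ℝ} (hp : 1 < p) {n : ℕ} (hn : 4 ≤ n) : (Kset p n).Nonempty := by
  refine ⟨fun v => if v = (⟨1, by omega⟩ : Fin (n+1)) then 1 else 0, ?_, ?_, ?_⟩
  · simp only [Set.mem_setOf_eq]
    rw [if_neg]
    intro h
    have := congrArg Fin.val h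
    simpa using this
  · show (if (Fin.last n) = (⟨1, by omega⟩ : Fin (n+1)) then (1:ℝ) else 0) = 0
    rw [if_neg]
    intro h
    have := congrArg Fin.val h
    simp [Fin.val_last] at this
    omega
  · rw [den]
    rw [Finset.sum_eq_single (⟨1, by omega⟩ : Fin (n+1))]
    · simp [Real.one_rpow]
    · intro b _ hb
      rw [if_neg hb, abs_zero, Real.zero_rpow (by linarith)]
    · intro h
      exact absurd (mem_univ _) h

/-- Existence of a nonnegative normalized minimizer. -/
lemma exists_min {p : ℝ} (hp : 1 < p) {n : ℕ} (hn : 4 ≤ n) :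
    ∃ f ∈ Kset p n, (∀ g ∈ Kset p n, pnum p n f ≤ pnum p n g) ∧ (∀ v, 0 ≤ f v) := by
  obtain ⟨f0, hf0K, hf0min⟩ := (Kset_compact hp n).exists_isMinOn (Kset_nonempty hp hn)
    (continuous_pnum p (by linarith) n).continuousOn
  refine ⟨fun v => |f0 v|, ?_, ?_, fun v => abs_nonneg _⟩
  · obtain ⟨h0, hl, hden⟩ := hf0K
    refine ⟨by show |f0 0| = 0; rw [h0, abs_zero], by show |f0 (Fin.last n)| = 0; rw [hl, abs_zero], ?_⟩
    rw [← hden, den, den]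
    exact sum_congr rfl fun v _ => by rw [abs_abs]
  · intro g hg
    have h1 : pnum p n (fun v => |f0 v|) ≤ pnum p n f0 := by
      refine sum_le_sum fun j _ => ?_
      exact Real.rpow_le_rpow (abs_nonneg _) (abs_abs_sub_abs_le_abs_sub _ _) (by linarith)
    exact le_trans h1 (hf0min hg)


/-! ### Characterization of `lambda1` of the path -/

lemma min_le_ratio {p : ℝ} (hp : 1 < p) {n : ℕ}
    {f : Fin (n+1) → ℝ} (hmin : ∀ g ∈ Kset p n, pnum p n f ≤ pnum p n g)
    {g : Fin (n+1) → ℝ} (h0 : g 0 = 0) (hl : g (Fin.last n) = 0) (hg : g ≠ 0) :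
    pnum p n f ≤ pnum p n g / den p g := by
  have hd : 0 < den p g := den_pos p hg
  set c : ℝ := (den p g) ^ (-(1/p)) with hc
  have hcpos : 0 < c := Real.rpow_pos_of_pos hd _
  have hcp : |c| ^ p = (den p g)⁻¹ := by
    rw [abs_of_pos hcpos, hc, ← Real.rpow_mul hd.le]
    have he : (-(1/p)) * p = -1 := by field_simp
    rw [he, Real.rpow_neg_one]
  have hg'K : (fun v => c * g v) ∈ Kset p n := by
    refine ⟨?_, ?_, ?_⟩
    · show c * g 0 = 0; rw [h0, mul_zero]
    · show c * g (Fin.last n) = 0; rw [hl, mul_zero]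
    · rw [den_smul, hcp, inv_mul_cancel₀ (ne_of_gt hd)]
  have h1 := hmin _ hg'K
  rw [pnum_smul, hcp] at h1
  rw [div_eq_inv_mul]
  exact h1

lemma glob_ineq {p : ℝ} (hp : 1 < p) {n : ℕ}
    {f : Fin (n+1) → ℝ} (hmin : ∀ g ∈ Kset p n, pnum p n f ≤ pnum p n g)
    {g : Fin (n+1) → ℝ} (h0 : g 0 = 0) (hl : g (Fin.last n) = 0) :
    pnum p n f * den p g ≤ pnum p n g := by
  by_cases hg : g = 0
  · rw [hg, den_zero (by linarith : p ≠ 0), mul_zero]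
    exact pnum_nonneg _ _ _
  · have h1 := min_le_ratio hp hmin h0 hl hg
    rw [le_div_iff₀ (den_pos p hg)] at h1
    exact h1

lemma lambda1_path_eq {p : ℝ} (hp : 1 < p) {n : ℕ} (hn : 4 ≤ n)
    {f : Fin (n+1) → ℝ} (hfK : f ∈ Kset p n)
    (hmin : ∀ g ∈ Kset p n, pnum p n f ≤ pnum p n g) :
    lambda1 (pathG (n+1)) p = pnum p n f := by
  obtain ⟨h0, hl, hden⟩ := hfK
  have hfne : f ≠ 0 := by
    intro h
    rw [h, den_zero (by linarith : p ≠ 0)] at hden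
    exact zero_ne_one hden
  have hbdd : BddBelow {r | ∃ g : Fin (n+1) → ℝ, g ≠ 0 ∧
      (∀ v, (pathG (n+1)).degree v = 1 → g v = 0) ∧ r = rayleigh (pathG (n+1)) p g} := by
    refine ⟨0, ?_⟩
    rintro r ⟨g, hg, hadm, rfl⟩
    rw [rayleigh_path]
    exact div_nonneg (pnum_nonneg _ _ _) (den_nonneg _ _)
  have hmem : pnum p n f ∈ {r | ∃ g : Fin (n+1) → ℝ, g ≠ 0 ∧
      (∀ v, (pathG (n+1)).degree v = 1 → g v = 0) ∧ r = rayleigh (pathG (n+1)) p g} :=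
    ⟨f, hfne, (adm_iff hn f).mpr ⟨h0, hl⟩, by rw [rayleigh_path, hden, div_one]⟩
  unfold lambda1
  refine le_antisymm (csInf_le hbdd hmem) (le_csInf ⟨_, hmem⟩ ?_)
  rintro r ⟨g, hg, hadm, rfl⟩
  rw [rayleigh_path]
  obtain ⟨hg0, hgl⟩ := (adm_iff hn g).mp hadm
  exact min_le_ratio hp hmin hg0 hgl hg


/-! ### Euler–Lagrange equations -/

lemma natCast_fin_eq_iff {m a b : ℕ} [NeZero m] (ha : a < m) (hb : b < m) :
    ((a : Fin m) = (b : Fin m)) ↔ a = b := by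
  rw [Fin.ext_iff, Fin.val_natCast, Fin.val_natCast, Nat.mod_eq_of_lt ha, Nat.mod_eq_of_lt hb]

lemma euler_lagrange {p : ℝ} (hp : 1 < p) {n : ℕ} (hn : 4 ≤ n) {f : Fin (n+1) → ℝ}
    (hfK : f ∈ Kset p n) (hmin : ∀ g ∈ Kset p n, pnum p n f ≤ pnum p n g)
    {k : ℕ} (hk1 : 1 ≤ k) (hk2 : k ≤ n - 1) :
    phi p (f ↑k - f ↑(k-1)) - phi p (f ↑(k+1) - f ↑k)
      = pnum p n f * phi p (f ↑k) := by
  classical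
  obtain ⟨hf0, hfl, hfden⟩ := hfK
  set lam := pnum p n f with hlam
  set e1 := f (↑k : Fin (n+1)) - f ↑(k-1) with he1
  set e2 := f (↑(k+1) : Fin (n+1)) - f ↑k with he2
  set fk : ℝ → (Fin (n+1) → ℝ) :=
    fun t v => f v + t * (if v = (↑k : Fin (n+1)) then 1 else 0) with hfk
  have hkval : ((↑k : Fin (n+1)) : ℕ) = k := by
    rw [Fin.val_natCast]; exact Nat.mod_eq_of_lt (by omega)
  -- admissibility of perturbations
  have hfk0 : ∀ t, fk t 0 = 0 := by
    intro t
    have : (0 : Fin (n+1)) ≠ (↑k : Fin (n+1)) := by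
      intro h
      have := congrArg Fin.val h
      rw [Fin.val_zero, hkval] at this
      omega
    simp only [hfk, if_neg this, mul_zero, add_zero, hf0]
  have hfkl : ∀ t, fk t (Fin.last n) = 0 := by
    intro t
    have : (Fin.last n) ≠ (↑k : Fin (n+1)) := by
      intro h
      have := congrArg Fin.val h
      rw [Fin.val_last, hkval] at this
      omega
    simp only [hfk, if_neg this, mul_zero, add_zero, hfl]
  set q : ℝ → ℝ := fun t => pnum p n (fk t) - lam * den p (fk t) with hq
  have hq0 : q 0 = 0 := by
    have hfkeq : fk 0 = f := by funext v; simp [hfk]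
    rw [hq]
    simp only [hfkeq, hfden, mul_one, ← hlam, sub_self]
  have hqnonneg : ∀ t, 0 ≤ q t := by
    intro t
    have := glob_ineq hp hmin (hfk0 t) (hfkl t)
    rw [hq]
    dsimp only
    linarith
  have hloc : IsLocalMin q 0 := by
    refine Filter.Eventually.of_forall fun t => ?_
    rw [hq0]; exact hqnonneg t
  -- derivative of the numerator part
  have hd1 : HasDerivAt (fun t => pnum p n (fk t))
      (∑ j ∈ range n, ((if j = k-1 then p * phi p e1 else 0)
        + (if j = k then -(p * phi p e2) else 0))) 0 := by
    have hform : (fun t => pnum p n (fk t))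
        = fun t => ∑ j ∈ range n, |fk t ↑(j+1) - fk t ↑j| ^ p := rfl
    rw [hform]
    refine HasDerivAt.fun_sum fun j hj => ?_
    rw [mem_range] at hj
    have hjval : ((↑j : Fin (n+1)) : ℕ) = j := by
      rw [Fin.val_natCast]; exact Nat.mod_eq_of_lt (by omega)
    have hj1val : ((↑(j+1) : Fin (n+1)) : ℕ) = j + 1 := by
      rw [Fin.val_natCast]; exact Nat.mod_eq_of_lt (by omega)
    by_cases hc1 : j = k - 1
    · -- j + 1 = k, j ≠ k
      have hjk : j + 1 = k := by omega
      have hcast1 : (↑(j+1) : Fin (n+1)) = (↑k : Fin (n+1)) := by rw [hjk]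
      have hcast2 : (↑j : Fin (n+1)) ≠ (↑k : Fin (n+1)) := by
        intro h
        have := congrArg Fin.val h
        rw [hjval, hkval] at this
        omega
      have hfun : (fun t => |fk t ↑(j+1) - fk t ↑j| ^ p)
          = fun t => |e1 + t| ^ p := by
        funext t
        simp only [hfk, if_pos hcast1, if_neg hcast2, mul_one, mul_zero, add_zero]
        congr 1
        rw [he1, hjk]
        have : (↑j : Fin (n+1)) = (↑(k-1) : Fin (n+1)) := by rw [hc1]
        rw [this]
        ring
      rw [hfun, if_pos hc1, if_neg (by omega)]
      have h := hasDerivAt_add_abs_rpow hp e1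
      simpa using h
    · by_cases hc2 : j = k
      · have hcast1 : (↑(j+1) : Fin (n+1)) ≠ (↑k : Fin (n+1)) := by
          intro h
          have := congrArg Fin.val h
          rw [hj1val, hkval] at this
          omega
        have hcast2 : (↑j : Fin (n+1)) = (↑k : Fin (n+1)) := by rw [hc2]
        have hfun : (fun t => |fk t ↑(j+1) - fk t ↑j| ^ p)
            = fun t => |e2 - t| ^ p := by
          funext t
          simp only [hfk, if_pos hcast2, if_neg hcast1, mul_one, mul_zero, add_zero]
          congr 1
          rw [he2, hc2]
          ring
        rw [hfun, if_neg hc1, if_pos hc2]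
        have h := hasDerivAt_sub_abs_rpow hp e2
        simpa using h
      · have hcast1 : (↑(j+1) : Fin (n+1)) ≠ (↑k : Fin (n+1)) := by
          intro h
          have := congrArg Fin.val h
          rw [hj1val, hkval] at this
          omega
        have hcast2 : (↑j : Fin (n+1)) ≠ (↑k : Fin (n+1)) := by
          intro h
          have := congrArg Fin.val h
          rw [hjval, hkval] at this
          omega
        have hfun : (fun t => |fk t ↑(j+1) - fk t ↑j| ^ p)
            = fun _ => |f ↑(j+1) - f ↑j| ^ p := by
          funext t
          simp only [hfk, if_neg hcast1, if_neg hcast2, mul_zero, add_zero]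
        rw [hfun, if_neg hc1, if_neg hc2]
        simpa using hasDerivAt_const (0:ℝ) (|f (↑(j+1) : Fin (n+1)) - f ↑j| ^ p)
  have hd1' : HasDerivAt (fun t => pnum p n (fk t)) (p * phi p e1 - p * phi p e2) 0 := by
    have hsum : (∑ j ∈ range n, ((if j = k-1 then p * phi p e1 else 0)
        + (if j = k then -(p * phi p e2) else 0)))
        = p * phi p e1 - p * phi p e2 := by
      rw [sum_add_distrib, Finset.sum_ite_eq' (range n) (k-1) (fun _ => p * phi p e1),
        Finset.sum_ite_eq' (range n) k (fun _ => -(p * phi p e2)),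
        if_pos (mem_range.mpr (by omega)), if_pos (mem_range.mpr (by omega))]
      ring
    rwa [hsum] at hd1
  -- derivative of the denominator part
  have hd2 : HasDerivAt (fun t => den p (fk t)) (p * phi p (f ↑k)) 0 := by
    have hform : (fun t => den p (fk t)) = fun t => ∑ v : Fin (n+1), |fk t v| ^ p := rfl
    rw [hform]
    have hsum : (∑ v : Fin (n+1), (if v = (↑k : Fin (n+1)) then p * phi p (f ↑k) else 0))
        = p * phi p (f ↑k) := by
      rw [Finset.sum_ite_eq' univ ((↑k : Fin (n+1))) (fun _ => p * phi p (f ↑k)),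
        if_pos (mem_univ _)]
    rw [← hsum]
    refine HasDerivAt.fun_sum fun v _ => ?_
    by_cases hv : v = (↑k : Fin (n+1))
    · have hfun : (fun t => |fk t v| ^ p) = fun t => |f ↑k + t| ^ p := by
        funext t
        show |f v + t * (if v = (↑k : Fin (n+1)) then 1 else 0)| ^ p = |f ↑k + t| ^ p
        rw [if_pos hv, mul_one, hv]
      rw [hfun, if_pos hv]
      exact hasDerivAt_add_abs_rpow hp (f ↑k)
    · have hfun : (fun t => |fk t v| ^ p) = fun _ => |f v| ^ p := by
        funext t
        simp only [hfk, if_neg hv, mul_zero, add_zero]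
      rw [hfun, if_neg hv]
      exact hasDerivAt_const (0:ℝ) _
  have hdq : HasDerivAt q (p * phi p e1 - p * phi p e2 - lam * (p * phi p (f ↑k))) 0 :=
    hd1'.sub (hd2.const_mul lam)
  have hzero := hloc.hasDerivAt_eq_zero hdq
  have hp0 : p ≠ 0 := by linarith
  have h2 : p * (phi p e1 - phi p e2 - lam * phi p (f ↑k)) = 0 := by
    linear_combination hzero
  have h3 := (mul_eq_zero.mp h2).resolve_left hp0
  linarith


/-! ### Structure of the minimizer -/

lemma lam_pos {p : ℝ} (hp : 1 < p) {n : ℕ} (hn : 4 ≤ n) {f : Fin (n+1) → ℝ}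
    (hfK : f ∈ Kset p n) : 0 < pnum p n f := by
  obtain ⟨hf0, hfl, hfden⟩ := hfK
  rcases eq_or_lt_of_le (pnum_nonneg p n f) with h | h
  · exfalso
    have hsum0 : pnum p n f = 0 := h.symm
    rw [pnum] at hsum0
    have hz : ∀ j ∈ range n, |f (↑(j+1) : Fin (n+1)) - f ↑j| ^ p = 0 :=
      (Finset.sum_eq_zero_iff_of_nonneg
        (fun j _ => Real.rpow_nonneg (abs_nonneg _) _)).mp hsum0
    have hdiff : ∀ j, j < n → f (↑(j+1) : Fin (n+1)) = f ↑j := by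
      intro j hj
      have := hz j (mem_range.mpr hj)
      have habs : |f (↑(j+1) : Fin (n+1)) - f ↑j| = 0 := by
        by_contra hc
        have hpos : 0 < |f (↑(j+1) : Fin (n+1)) - f ↑j| :=
          lt_of_le_of_ne (abs_nonneg _) (Ne.symm hc)
        have := Real.rpow_pos_of_pos hpos p
        linarith
      have := abs_eq_zero.mp habs
      linarith
    have hallz : ∀ j, j ≤ n → f (↑j : Fin (n+1)) = 0 := by
      intro j
      induction j with
      | zero => intro _; rw [Nat.cast_zero]; exact hf0
      | succ i ih =>
        intro hi
        rw [hdiff i (by omega), ih (by omega)]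
    have hden0 : den p f = 0 := by
      rw [den_eq p f]
      refine Finset.sum_eq_zero fun j hj => ?_
      rw [mem_range] at hj
      rw [hallz j (by omega), abs_zero, Real.zero_rpow (by linarith)]
    rw [hfden] at hden0
    exact one_ne_zero hden0
  · exact h

lemma zero_spread {p : ℝ} (hp : 1 < p) {n : ℕ} (hn : 4 ≤ n) {f : Fin (n+1) → ℝ}
    (hfK : f ∈ Kset p n) (hmin : ∀ g ∈ Kset p n, pnum p n f ≤ pnum p n g)
    (hnn : ∀ v, 0 ≤ f v)
    {k : ℕ} (hk1 : 1 ≤ k) (hk2 : k ≤ n - 1) (hk0 : f (↑k : Fin (n+1)) = 0) :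
    f (↑(k-1) : Fin (n+1)) = 0 ∧ f (↑(k+1) : Fin (n+1)) = 0 := by
  have el := euler_lagrange hp hn hfK hmin hk1 hk2
  rw [hk0, phi_zero, mul_zero] at el
  have h1 : phi p (0 - f (↑(k-1) : Fin (n+1))) ≤ 0 := by
    apply phi_nonpos_of_nonpos
    have := hnn (↑(k-1) : Fin (n+1))
    linarith
  have h2 : 0 ≤ phi p (f (↑(k+1) : Fin (n+1)) - 0) := by
    apply phi_nonneg_of_nonneg
    have := hnn (↑(k+1) : Fin (n+1))
    linarith
  have hz1 : phi p (0 - f (↑(k-1) : Fin (n+1))) = 0 := by linarith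
  have hz2 : phi p (f (↑(k+1) : Fin (n+1)) - 0) = 0 := by linarith
  constructor
  · have := phi_eq_zero_iff.mp hz1
    linarith
  · have := phi_eq_zero_iff.mp hz2
    linarith

lemma interior_pos {p : ℝ} (hp : 1 < p) {n : ℕ} (hn : 4 ≤ n) {f : Fin (n+1) → ℝ}
    (hfK : f ∈ Kset p n) (hmin : ∀ g ∈ Kset p n, pnum p n f ≤ pnum p n g)
    (hnn : ∀ v, 0 ≤ f v)
    {k : ℕ} (hk1 : 1 ≤ k) (hk2 : k ≤ n - 1) : 0 < f (↑k : Fin (n+1)) := by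
  rcases eq_or_lt_of_le (hnn (↑k : Fin (n+1))) with h | h
  · exfalso
    -- zero spreads everywhere
    have hup : ∀ i, k + i ≤ n → f (↑(k+i) : Fin (n+1)) = 0 := by
      intro i
      induction i with
      | zero => intro _; simpa using h.symm
      | succ i ih =>
        intro hi
        have hki : k + i ≤ n - 1 := by omega
        have h0 : f (↑(k+i) : Fin (n+1)) = 0 := ih (by omega)
        have := (zero_spread hp hn hfK hmin hnn (by omega) hki h0).2
        have harith : k + i + 1 = k + (i+1) := by omega
        rwa [harith] at this
    have hdown : ∀ i, i ≤ k → f (↑(k-i) : Fin (n+1)) = 0 := by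
      intro i
      induction i with
      | zero => intro _; simpa using h.symm
      | succ i ih =>
        intro hi
        have h0 : f (↑(k-i) : Fin (n+1)) = 0 := ih (by omega)
        have := (zero_spread hp hn hfK hmin hnn (by omega) (by omega) h0).1
        have harith : k - i - 1 = k - (i+1) := by omega
        rwa [harith] at this
    have hall : ∀ j, j ≤ n → f (↑j : Fin (n+1)) = 0 := by
      intro j hj
      rcases le_or_gt j k with hjk | hjk
      · have := hdown (k - j) (by omega)
        have harith : k - (k - j) = j := by omega
        rwa [harith] at this
      · have := hup (j - k) (by omega)
        have harith : k + (j - k) = j := by omega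
        rwa [harith] at this
    obtain ⟨-, -, hfden⟩ := hfK
    have hden0 : den p f = 0 := by
      rw [den_eq p f]
      refine Finset.sum_eq_zero fun j hj => ?_
      rw [mem_range] at hj
      rw [hall j (by omega), abs_zero, Real.zero_rpow (by linarith)]
    rw [hfden] at hden0
    exact one_ne_zero hden0
  · exact h

/-- Strict decrease of consecutive differences. -/
lemma diff_strict {p : ℝ} (hp : 1 < p) {n : ℕ} (hn : 4 ≤ n) {f : Fin (n+1) → ℝ}
    (hfK : f ∈ Kset p n) (hmin : ∀ g ∈ Kset p n, pnum p n f ≤ pnum p n g)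
    (hnn : ∀ v, 0 ≤ f v)
    {k : ℕ} (hk1 : 1 ≤ k) (hk2 : k ≤ n - 1) :
    f (↑(k+1) : Fin (n+1)) - f ↑k < f (↑k : Fin (n+1)) - f ↑(k-1) := by
  have el := euler_lagrange hp hn hfK hmin hk1 hk2
  have hpos := interior_pos hp hn hfK hmin hnn hk1 hk2
  have hlam := lam_pos hp hn hfK
  have h1 : 0 < pnum p n f * phi p (f ↑k) := mul_pos hlam (phi_pos_of_pos hpos)
  have h2 : phi p (f (↑(k+1) : Fin (n+1)) - f ↑k) < phi p (f (↑k : Fin (n+1)) - f ↑(k-1)) := by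
    linarith
  exact lt_of_phi_lt hp h2

/-- Weak antitonicity of the difference sequence. -/
lemma diff_antitone {p : ℝ} (hp : 1 < p) {n : ℕ} (hn : 4 ≤ n) {f : Fin (n+1) → ℝ}
    (hfK : f ∈ Kset p n) (hmin : ∀ g ∈ Kset p n, pnum p n f ≤ pnum p n g)
    (hnn : ∀ v, 0 ≤ f v)
    {a b : ℕ} (hab : a ≤ b) (hb : b ≤ n - 1) :
    f (↑(b+1) : Fin (n+1)) - f ↑b ≤ f (↑(a+1) : Fin (n+1)) - f ↑a := by
  induction b with
  | zero =>
    have ha : a = 0 := by omega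
    subst ha
    exact le_rfl
  | succ i ih =>
    rcases Nat.lt_or_ge a (i+1) with hai | hai
    · have h1 := ih (by omega) (by omega)
      have h2 := diff_strict hp hn hfK hmin hnn (k := i+1) (by omega) hb
      have harith : i + 1 - 1 = i := by omega
      rw [harith] at h2
      linarith
    · have ha : a = i + 1 := by omega
      subst ha
      exact le_rfl


/-! ### Reversal symmetry -/

lemma rev_natCast {n : ℕ} {j : ℕ} (hj : j ≤ n) :
    Fin.rev (↑j : Fin (n+1)) = (↑(n - j) : Fin (n+1)) := by
  ext
  rw [Fin.val_rev, Fin.val_natCast, Fin.val_natCast,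
    Nat.mod_eq_of_lt (by omega), Nat.mod_eq_of_lt (by omega)]
  omega

lemma den_rev (p : ℝ) {n : ℕ} (f : Fin (n+1) → ℝ) :
    den p (fun v => f (Fin.rev v)) = den p f := by
  rw [den, den]
  exact Fintype.sum_bijective Fin.rev Fin.rev_involutive.bijective _ _ fun v => rfl

lemma pnum_rev (p : ℝ) {n : ℕ} (f : Fin (n+1) → ℝ) :
    pnum p n (fun v => f (Fin.rev v)) = pnum p n f := by
  rw [pnum, pnum, ← Finset.sum_range_reflect]
  refine sum_congr rfl fun j hj => ?_
  rw [mem_range] at hj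
  rw [rev_natCast (by omega : n - 1 - j + 1 ≤ n), rev_natCast (by omega : n - 1 - j ≤ n)]
  have h1 : n - (n - 1 - j) = j + 1 := by omega
  have h2 : n - (n - 1 - j + 1) = j := by omega
  rw [h1, h2, abs_sub_comm]

lemma Kset_rev {p : ℝ} {n : ℕ} {f : Fin (n+1) → ℝ} (hfK : f ∈ Kset p n) :
    (fun v => f (Fin.rev v)) ∈ Kset p n := by
  obtain ⟨h0, hl, hden⟩ := hfK
  refine ⟨?_, ?_, ?_⟩
  · show f (Fin.rev 0) = 0
    have : Fin.rev (0 : Fin (n+1)) = Fin.last n := by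
      ext; rw [Fin.val_rev, Fin.val_last]; simp
    rw [this]; exact hl
  · show f (Fin.rev (Fin.last n)) = 0
    have : Fin.rev (Fin.last n : Fin (n+1)) = 0 := by
      ext; rw [Fin.val_rev, Fin.val_last]; simp
    rw [this]; exact h0
  · rw [den_rev]; exact hden


/-! ### The folding construction -/

lemma fold {p : ℝ} (hp : 1 < p) {n : ℕ} (hn : 4 ≤ n) {f : Fin (n+1) → ℝ}
    (hfK : f ∈ Kset p n) (hmin : ∀ g ∈ Kset p n, pnum p n f ≤ pnum p n g)
    (hnn : ∀ v, 0 ≤ f v)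
    (he1 : 0 ≤ f ((2:ℕ) : Fin (n+1)) - f ((1:ℕ) : Fin (n+1))) :
    lambda1 (tadpole n 3) p < pnum p n f := by
  haveI : NeZero n := ⟨by omega⟩
  have hppos : (0:ℝ) < p := by linarith
  set F : ℕ → ℝ := fun j => f ((j:ℕ) : Fin (n+1)) with hF
  set lam := pnum p n f with hlam
  have hlampos : 0 < lam := lam_pos hp hn hfK
  have hF0 : F 0 = 0 := by
    show f ((0:ℕ) : Fin (n+1)) = 0
    rw [Nat.cast_zero]
    exact hfK.1
  have hFn : F n = 0 := by
    show f ((n:ℕ) : Fin (n+1)) = 0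
    have : ((n:ℕ) : Fin (n+1)) = Fin.last n := by
      ext
      rw [Fin.val_natCast, Nat.mod_eq_of_lt (by omega), Fin.val_last]
    rw [this]
    exact hfK.2.1
  have hpos1 : 0 < F 1 := interior_pos hp hn hfK hmin hnn (by omega) (by omega)
  have hpos2 : 0 < F 2 := interior_pos hp hn hfK hmin hnn (by omega) (by omega)
  have hpos3 : 0 < F 3 := interior_pos hp hn hfK hmin hnn (by omega) (by omega)
  have hF4 : 0 ≤ F 4 := hnn _
  have hd1 : F 2 - F 1 < F 1 - F 0 := by
    have h := diff_strict hp hn hfK hmin hnn (k := 1) (by omega) (by omega)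
    norm_num at h
    show f ((2:ℕ) : Fin (n+1)) - f ((1:ℕ) : Fin (n+1))
      < f ((1:ℕ) : Fin (n+1)) - f ((0:ℕ) : Fin (n+1))
    rw [Nat.cast_zero]
    convert h using 3 <;> norm_num
  have hd2 : F 3 - F 2 < F 2 - F 1 := by
    have h := diff_strict hp hn hfK hmin hnn (k := 2) (by omega) (by omega)
    norm_num at h
    convert h using 3 <;> norm_num
  have hd3 : F 4 - F 3 < F 3 - F 2 := by
    have h := diff_strict hp hn hfK hmin hnn (k := 3) (by omega) (by omega)
    norm_num at h
    convert h using 3 <;> norm_num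
  -- the key inequality
  have hb12 : |F 1| ^ p ≤ |F 2| ^ p := by
    rw [abs_of_pos hpos1, abs_of_pos hpos2]
    exact Real.rpow_le_rpow hpos1.le (by linarith [he1]) hppos.le
  have hlb : 0 ≤ lam * (|F 2| ^ p - |F 1| ^ p) := mul_nonneg hlampos.le (by linarith)
  have hkey : |F 3 - F 2| ^ p < |F 1 - F 0| ^ p + |F 2 - F 1| ^ p
      + lam * (|F 2| ^ p - |F 1| ^ p) := by
    have ha0 : 0 ≤ |F 1 - F 0| ^ p := Real.rpow_nonneg (abs_nonneg _) _
    have ha1 : 0 ≤ |F 2 - F 1| ^ p := Real.rpow_nonneg (abs_nonneg _) _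
    rcases le_or_gt 0 (F 3 - F 2) with hc | hc
    · have habs : |F 3 - F 2| < |F 2 - F 1| := by
        rw [abs_of_nonneg hc, abs_of_nonneg he1]
        exact hd2
      have := Real.rpow_lt_rpow (abs_nonneg _) habs hppos
      linarith
    · have habs : |F 3 - F 2| < |F 1 - F 0| := by
        rw [abs_of_neg hc, abs_of_pos (by rw [hF0]; linarith : (0:ℝ) < F 1 - F 0)]
        linarith [hF0]
      have := Real.rpow_lt_rpow (abs_nonneg _) habs hppos
      linarith
  -- the test function on the tadpole
  set G : ℕ → ℝ := fun u => if u = 0 then F 2 else F (u+1) with hG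
  set g : Fin n → ℝ := fun v => G v.val with hg
  have hgcast : ∀ k, k < n → g ((k:ℕ) : Fin n) = G k := by
    intro k hk
    show G (((k:ℕ) : Fin n)).val = G k
    rw [Fin.val_natCast, Nat.mod_eq_of_lt hk]
  have hr1 : n - 1 + 1 = n := by omega
  have hr2 : n - 2 + 1 = n - 1 := by omega
  have hG0 : G 0 = F 2 := by simp [hG]
  have hGs : ∀ i, G (i+1) = F (i+2) := by
    intro i
    rw [hG]
    simp only [Nat.succ_ne_zero, if_false]
  -- denominator of g
  have hgden : den p g = 1 - |F 1| ^ p + |F 2| ^ p := by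
    have h1 : den p g = ∑ k ∈ range n, |G k| ^ p :=
      Fin.sum_univ_eq_sum_range (fun k => |G k| ^ p) n
    have h2 : ∑ k ∈ range n, |G k| ^ p
        = (∑ i ∈ range (n-1), |G (i+1)| ^ p) + |G 0| ^ p := by
      rw [← hr1]
      exact Finset.sum_range_succ' _ (n-1)
    have h3 : ∑ i ∈ range (n-1), |G (i+1)| ^ p = ∑ i ∈ range (n-1), |F (i+2)| ^ p :=
      sum_congr rfl fun i _ => by rw [hGs]
    have h4 : den p f = ∑ k ∈ range (n+1), |F k| ^ p := den_eq p f
    have h5 : ∑ k ∈ range (n+1), |F k| ^ p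
        = (∑ i ∈ range n, |F (i+1)| ^ p) + |F 0| ^ p := Finset.sum_range_succ' _ n
    have h6 : ∑ i ∈ range n, |F (i+1)| ^ p
        = (∑ i ∈ range (n-1), |F (i+2)| ^ p) + |F 1| ^ p := by
      rw [← hr1]
      exact Finset.sum_range_succ' (fun i => |F (i+1)| ^ p) (n-1)
    have hF0p : |F 0| ^ p = 0 := by rw [hF0, abs_zero, Real.zero_rpow (ne_of_gt hppos)]
    have hden1 : den p f = 1 := hfK.2.2
    rw [h1, h2, h3, hG0]
    rw [h4, h5, h6, hF0p] at hden1
    linarith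
  have hgdenpos : 0 < den p g := by rw [hgden]; linarith
  -- numerator of g
  have hgnum : tnum p n g = lam - |F 1 - F 0| ^ p - |F 2 - F 1| ^ p + |F 3 - F 2| ^ p := by
    have h1 : tnum p n g = (∑ j ∈ range (n-1), |g ((j+1 : ℕ) : Fin n) - g ((j:ℕ) : Fin n)| ^ p)
        + |g ((2:ℕ) : Fin n) - g ((0:ℕ) : Fin n)| ^ p := rfl
    have h2 : ∑ j ∈ range (n-1), |g ((j+1 : ℕ) : Fin n) - g ((j:ℕ) : Fin n)| ^ p
        = ∑ j ∈ range (n-1), |G (j+1) - G j| ^ p := by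
      refine sum_congr rfl fun j hj => ?_
      rw [mem_range] at hj
      rw [hgcast (j+1) (by omega), hgcast j (by omega)]
    have h3 : ∑ j ∈ range (n-1), |G (j+1) - G j| ^ p
        = (∑ i ∈ range (n-2), |G (i+2) - G (i+1)| ^ p) + |G 1 - G 0| ^ p := by
      rw [← hr2]
      exact Finset.sum_range_succ' (fun j => |G (j+1) - G j| ^ p) (n-2)
    have h4 : |G 1 - G 0| ^ p = 0 := by
      rw [hGs, hG0]
      have : F (1+1) - F 2 = 0 := by norm_num
      rw [this, abs_zero, Real.zero_rpow (ne_of_gt hppos)]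
    have h5 : ∑ i ∈ range (n-2), |G (i+2) - G (i+1)| ^ p
        = ∑ i ∈ range (n-2), |F (i+3) - F (i+2)| ^ p := by
      refine sum_congr rfl fun i _ => ?_
      rw [hGs, hGs]
    -- decompose lam
    have h6 : lam = ∑ j ∈ range n, |F (j+1) - F j| ^ p := rfl
    have h7 : ∑ j ∈ range n, |F (j+1) - F j| ^ p
        = (∑ i ∈ range (n-1), |F (i+2) - F (i+1)| ^ p) + |F 1 - F 0| ^ p := by
      rw [← hr1]
      exact Finset.sum_range_succ' (fun j => |F (j+1) - F j| ^ p) (n-1)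
    have h8 : ∑ i ∈ range (n-1), |F (i+2) - F (i+1)| ^ p
        = (∑ i ∈ range (n-2), |F (i+3) - F (i+2)| ^ p) + |F 2 - F 1| ^ p := by
      rw [← hr2]
      exact Finset.sum_range_succ' (fun i => |F (i+2) - F (i+1)| ^ p) (n-2)
    have h9 : |g ((2:ℕ) : Fin n) - g ((0:ℕ) : Fin n)| ^ p = |F 3 - F 2| ^ p := by
      rw [hgcast 2 (by omega), hgcast 0 (by omega), hG0]
      have : G 2 = F 3 := by rw [hGs 1]
      rw [this]
    rw [h1, h2, h3, h4, h5, h9, add_zero]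
    rw [h7, h8] at h6
    linarith
  -- the Rayleigh quotient of g is `< lam`
  have hrq : rayleigh (tadpole n 3) p g < lam := by
    rw [rayleigh_tad p hn g, div_lt_iff₀ hgdenpos, hgnum, hgden]
    have hexp : lam * (1 - |F 1| ^ p + |F 2| ^ p)
        = lam + lam * (|F 2| ^ p - |F 1| ^ p) := by ring
    rw [hexp]
    linarith
  -- conclude
  have hgne : g ≠ 0 := by
    intro h
    have h2 := congrFun h ((0:ℕ) : Fin n)
    rw [hgcast 0 (by omega), hG0] at h2
    simp only [Pi.zero_apply] at h2
    linarith
  have hgadm : ∀ v, (tadpole n 3).degree v = 1 → g v = 0 := by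
    intro v hv
    have hvval := tadpole_degree_one hn v hv
    have hGn : G (n-1) = F n := by
      simp only [hG]
      rw [if_neg (by omega : ¬ (n-1 = 0)), hr1]
    show G v.val = 0
    rw [hvval, hGn]
    exact hFn
  have hbdd : BddBelow {r | ∃ g : Fin n → ℝ, g ≠ 0 ∧
      (∀ v, (tadpole n 3).degree v = 1 → g v = 0) ∧ r = rayleigh (tadpole n 3) p g} := by
    refine ⟨0, ?_⟩
    rintro r ⟨h, hne, hadm, rfl⟩
    rw [rayleigh_tad p hn h]
    exact div_nonneg (tnum_nonneg _ _ _) (den_nonneg _ _)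
  have hmem : rayleigh (tadpole n 3) p g ∈ {r | ∃ g : Fin n → ℝ, g ≠ 0 ∧
      (∀ v, (tadpole n 3).degree v = 1 → g v = 0) ∧ r = rayleigh (tadpole n 3) p g} :=
    ⟨g, hgne, hgadm, rfl⟩
  have hle : lambda1 (tadpole n 3) p ≤ rayleigh (tadpole n 3) p g := by
    unfold lambda1
    exact csInf_le hbdd hmem
  exact lt_of_le_of_lt hle hrq

end PT

open Fin.NatCast

/-- Comparison of the first `p`-Dirichlet eigenvalues of `P_{n+1}` and `T_{n,3}`. -/
theorem path_gt_tadpole (n : ℕ) (hn : 4 ≤ n) {p : ℝ} (hp : 1 < p) :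
    lambda1 (pathG (n + 1)) p > lambda1 (tadpole n 3) p := by
  obtain ⟨f, hfK, hmin, hnn⟩ := PT.exists_min hp hn
  rw [PT.lambda1_path_eq hp hn hfK hmin]
  rcases le_or_gt 0 (f ((2:ℕ) : Fin (n+1)) - f ((1:ℕ) : Fin (n+1))) with hcase | hcase
  · exact PT.fold hp hn hfK hmin hnn hcase
  · set fr : Fin (n+1) → ℝ := fun v => f (Fin.rev v) with hfr
    have hfrK : fr ∈ PT.Kset p n := PT.Kset_rev hfK
    have hfrnum : PT.pnum p n fr = PT.pnum p n f := PT.pnum_rev p f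
    have hfrmin : ∀ g ∈ PT.Kset p n, PT.pnum p n fr ≤ PT.pnum p n g := by
      intro g hg
      rw [hfrnum]
      exact hmin g hg
    have hfrnn : ∀ v, 0 ≤ fr v := fun v => hnn _
    have hrev1 : fr ((1:ℕ) : Fin (n+1)) = f ((n-1 : ℕ) : Fin (n+1)) := by
      show f (Fin.rev ((1:ℕ) : Fin (n+1))) = _
      rw [PT.rev_natCast (by omega)]
    have hrev2 : fr ((2:ℕ) : Fin (n+1)) = f ((n-2 : ℕ) : Fin (n+1)) := by
      show f (Fin.rev ((2:ℕ) : Fin (n+1))) = _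
      rw [PT.rev_natCast (by omega)]
    have hanti := PT.diff_antitone hp hn hfK hmin hnn (a := 1) (b := n-2) (by omega) (by omega)
    have hn21 : n - 2 + 1 = n - 1 := by omega
    rw [hn21, (show (1+1:ℕ) = 2 by norm_num)] at hanti
    have he1' : 0 ≤ fr ((2:ℕ) : Fin (n+1)) - fr ((1:ℕ) : Fin (n+1)) := by
      rw [hrev1, hrev2]
      linarith
    have hfold := PT.fold hp hn hfrK hfrmin hfrnn he1'
    rw [hfrnum] at hfold
    exact hfold
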